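/- Let D be an integrable real random variable with continuous cumulative distribution function F. Let r, c, v, g be real parameters with r > c ≥ 0, c + v > 0, and g ≥ 0, and set E := c + v, U := r − c + g, and W := r − c. Define the newsvendor profit π(x, d) := r·min(x, d) − c·x − v·max(x − d, 0) − g·max(d − x, 0), the loss L(x, d) := −π(x, d), and for β ∈ (0, 1) the β-conditional value-at-risk CVaR_β(x) := inf_{α ∈ ℝ} (α + (1/(1 − β))·E[max(L(x, D) − α, 0)]). Suppose q₁, q₂ ∈ ℝ satisfy F(q₁) = U·(1 − β)/(E + U) and F(q₂) = (E·β + U)/(E + U), and set x* := ((E + W)·q₁ + (U − W)·q₂)/(E + U). Then for every x ∈ ℝ, CVaR_β(x*) ≤ CVaR_β(x). -/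

import Mathlib

open MeasureTheory

set_option maxHeartbeats 4000000 in
/-- Closed-form CVaR-minimising order quantity of the linear newsvendor problem
(Gotoh–Takano): with `E = c + v`, `U = r - c + g`, `W = r - c`, the order quantity
`x* = ((E + W)·q₁ + (U - W)·q₂)/(E + U)`, where `F(q₁) = U(1 - β)/(E + U)` and
`F(q₂) = (Eβ + U)/(E + U)`, minimises the `β`-conditional value-at-risk of the loss. -/
theorem newsvendor_cvar_minimiser {Ω : Type*} [MeasurableSpace Ω]
    (P : Measure Ω) [IsProbabilityMeasure P]
    (D : Ω → ℝ) (hDmeas : Measurable D) (hDint : Integrable D P)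
    (F : ℝ → ℝ) (hF : F = fun η => (P {ω | D ω ≤ η}).toReal)
    (hFcont : Continuous F)
    (r c v g : ℝ) (hrc : c < r) (hc : 0 ≤ c) (hcv : 0 < c + v) (hg : 0 ≤ g)
    (E U W : ℝ) (hE : E = c + v) (hU : U = r - c + g) (hW : W = r - c)
    (π : ℝ → ℝ → ℝ)
    (hπ : π = fun x d => r * min x d - c * x - v * max (x - d) 0 - g * max (d - x) 0)
    (L : ℝ → ℝ → ℝ) (hL : L = fun x d => -π x d)
    (β : ℝ) (hβ : β ∈ Set.Ioo (0 : ℝ) 1)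
    (CVaR : ℝ → ℝ)
    (hCVaR : CVaR = fun x =>
      ⨅ α : ℝ, (α + (1 / (1 - β)) * ∫ ω, max (L x (D ω) - α) 0 ∂P))
    (q₁ q₂ : ℝ)
    (hq₁ : F q₁ = U * (1 - β) / (E + U))
    (hq₂ : F q₂ = (E * β + U) / (E + U))
    (xs : ℝ) (hxs : xs = ((E + W) * q₁ + (U - W) * q₂) / (E + U)) :
    ∀ x : ℝ, CVaR xs ≤ CVaR x := by
  obtain ⟨hβ0, hβ1⟩ := hβ
  have hβ' : (0:ℝ) < 1 - β := by linarith
  have hβne : (1:ℝ) - β ≠ 0 := ne_of_gt hβ'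
  have hE0 : 0 < E := by rw [hE]; exact hcv
  have hU0 : 0 < U := by rw [hU]; linarith
  have hEW : 0 < E + W := by rw [hE, hW]; linarith
  have hUW : 0 ≤ U - W := by rw [hU, hW]; linarith
  have hEU : 0 < E + U := by linarith
  have hEUne : E + U ≠ 0 := ne_of_gt hEU
  -- the loss as a maximum of two affine functions of the demand
  have hLmax : ∀ x d : ℝ, L x d = max (E*x - (E+W)*d) (-(U*x) + (U-W)*d) := by
    intro x d
    have hrvg : (0:ℝ) ≤ r + v + g := by linarith
    simp only [hL, hπ]
    subst hE hU hW
    rcases le_total x d with h | h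
    · have h1 : x - d ≤ (0:ℝ) := by linarith
      have h2 : (0:ℝ) ≤ d - x := by linarith
      have h3 : (c+v)*x - ((c+v)+(r-c))*d ≤ -((r-c+g)*x) + ((r-c+g)-(r-c))*d := by
        nlinarith [mul_nonneg hrvg (sub_nonneg.mpr h)]
      rw [min_eq_left h, max_eq_right h1, max_eq_left h2, max_eq_right h3]
      ring
    · have h1 : (0:ℝ) ≤ x - d := by linarith
      have h2 : d - x ≤ (0:ℝ) := by linarith
      have h3 : -((r-c+g)*x) + ((r-c+g)-(r-c))*d ≤ (c+v)*x - ((c+v)+(r-c))*d := by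
        nlinarith [mul_nonneg hrvg (sub_nonneg.mpr h)]
      rw [min_eq_right h, max_eq_left h1, max_eq_right h2, max_eq_left h3]
      ring
  -- integrability helpers
  have hmaxint : ∀ (f₁ f₂ : Ω → ℝ), Integrable f₁ P → Integrable f₂ P →
      Integrable (fun ω => max (f₁ ω) (f₂ ω)) P := by
    intro f₁ f₂ hf₁ hf₂
    have heq : (fun ω => max (f₁ ω) (f₂ ω)) = fun ω => (f₁ ω + f₂ ω + |f₁ ω - f₂ ω|)/2 := by
      funext ω
      rcases le_total (f₁ ω) (f₂ ω) with h | h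
      · rw [max_eq_right h, abs_of_nonpos (by linarith)]; ring
      · rw [max_eq_left h, abs_of_nonneg (by linarith)]; ring
    rw [heq]
    exact ((hf₁.add hf₂).add (hf₁.sub hf₂).abs).div_const 2
  have hA : ∀ x α : ℝ, Integrable (fun ω => E*x - (E+W)*D ω - α) P := fun x α =>
    ((integrable_const (E*x - α)).add (hDint.const_mul (-(E+W)))).congr
      (Filter.Eventually.of_forall fun ω => by simp only [Pi.add_apply]; ring)
  have hB : ∀ x α : ℝ, Integrable (fun ω => -(U*x) + (U-W)*D ω - α) P := fun x α =>
    ((integrable_const (-(U*x) - α)).add (hDint.const_mul (U-W))).congr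
      (Filter.Eventually.of_forall fun ω => by simp only [Pi.add_apply]; ring)
  have hfun : ∀ x α : ℝ, (fun ω => max (L x (D ω) - α) 0)
      = fun ω => max (max (E*x - (E+W)*D ω - α) (-(U*x) + (U-W)*D ω - α)) 0 := by
    intro x α; funext ω
    rw [hLmax]
    congr 1
    exact (max_sub_sub_right _ _ _).symm
  have hLint : ∀ x α : ℝ, Integrable (fun ω => max (L x (D ω) - α) 0) P := by
    intro x α
    rw [hfun]
    exact hmaxint _ _ (hmaxint _ _ (hA x α) (hB x α)) (integrable_const 0)
  -- the two sets
  obtain ⟨s, hs_def⟩ : ∃ s : Set Ω, s = {ω | D ω ≤ q₁} := ⟨_, rfl⟩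
  obtain ⟨t, ht_def⟩ : ∃ t : Set Ω, t = {ω | q₂ < D ω} := ⟨_, rfl⟩
  have hmem_s : ∀ ω, ω ∈ s ↔ D ω ≤ q₁ := fun ω => by rw [hs_def]; exact Iff.rfl
  have hmem_t : ∀ ω, ω ∈ t ↔ q₂ < D ω := fun ω => by rw [ht_def]; exact Iff.rfl
  have hs : MeasurableSet s := hs_def ▸ measurableSet_le hDmeas measurable_const
  have ht : MeasurableSet t := ht_def ▸ measurableSet_lt measurable_const hDmeas
  have hms : (P s).toReal = F q₁ := by simp only [hs_def, hF]
  have hmt : (P t).toReal = 1 - F q₂ := by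
    have hcompl : t = {ω | D ω ≤ q₂}ᶜ := by
      rw [ht_def]; ext ω; simp only [Set.mem_setOf_eq, Set.mem_compl_iff, not_le]
    rw [hcompl, measure_compl (measurableSet_le hDmeas measurable_const) (measure_ne_top _ _),
      measure_univ, ENNReal.toReal_sub_of_le prob_le_one ENNReal.one_ne_top, ENNReal.toReal_one]
    simp only [hF]
  -- q₁ < q₂
  have hq12 : q₁ < q₂ := by
    by_contra h
    push_neg at h
    have hmono : F q₂ ≤ F q₁ := by
      simp only [hF]
      exact ENNReal.toReal_mono (measure_ne_top _ _)
        (measure_mono fun ω hw => le_trans hw h)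
    rw [hq₁, hq₂] at hmono
    have h3 := mul_le_mul_of_nonneg_right hmono hEU.le
    rw [div_mul_cancel₀ _ hEUne, div_mul_cancel₀ _ hEUne] at h3
    nlinarith [mul_pos hβ0 hEU]
  -- integral over indicator of affine function
  have hind : ∀ (a b : ℝ) (u : Set Ω), MeasurableSet u →
      (∫ ω, u.indicator (fun ω => a + b * D ω) ω ∂P)
        = a * (P u).toReal + b * ∫ ω, u.indicator D ω ∂P := by
    intro a b u hu
    have h1 : Integrable (u.indicator fun _ : Ω => a) P := (integrable_const a).indicator hu
    have h2 : Integrable (u.indicator fun ω => b * D ω) P := (hDint.const_mul b).indicator hu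
    have heq : ∀ ω, u.indicator (fun ω => a + b * D ω) ω
        = u.indicator (fun _ => a) ω + u.indicator (fun ω => b * D ω) ω := by
      intro ω; by_cases h : ω ∈ u <;>
        simp [Set.indicator_of_mem, Set.indicator_of_notMem, h]
    rw [integral_congr_ae (Filter.Eventually.of_forall heq), integral_add h1 h2,
      integral_indicator_const a hu]
    have h3 : ∀ ω, u.indicator (fun ω => b * D ω) ω = b * u.indicator D ω := by
      intro ω; by_cases h : ω ∈ u <;> simp [h]
    rw [integral_congr_ae (Filter.Eventually.of_forall h3), integral_const_mul]
    simp [smul_eq_mul, Measure.real]; ring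
  obtain ⟨I₁, hI₁⟩ : ∃ y : ℝ, y = ∫ ω, s.indicator D ω ∂P := ⟨_, rfl⟩
  obtain ⟨I₂, hI₂⟩ : ∃ y : ℝ, y = ∫ ω, t.indicator D ω ∂P := ⟨_, rfl⟩
  obtain ⟨C, hC⟩ : ∃ y : ℝ, y = (1/(1-β)) * (-(E+W) * I₁ + (U-W) * I₂) := ⟨_, rfl⟩
  -- integrability and value of the lower-bounding function G
  have hGint : ∀ x α : ℝ, Integrable (fun ω =>
      s.indicator (fun ω => E*x - (E+W)*D ω - α) ω
        + t.indicator (fun ω => -(U*x) + (U-W)*D ω - α) ω) P := fun x α =>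
    ((hA x α).indicator hs).add ((hB x α).indicator ht)
  have hGval : ∀ x α : ℝ, (∫ ω, (s.indicator (fun ω => E*x - (E+W)*D ω - α) ω
        + t.indicator (fun ω => -(U*x) + (U-W)*D ω - α) ω) ∂P)
      = ((E*x - α) * F q₁ - (E+W) * I₁) + ((-(U*x) - α) * (1 - F q₂) + (U-W) * I₂) := by
    intro x α
    rw [integral_add ((hA x α).indicator hs) ((hB x α).indicator ht)]
    have e1 : (fun ω : Ω => E*x - (E+W)*D ω - α) = fun ω : Ω => (E*x - α) + (-(E+W)) * D ω := by
      funext ω; ring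
    have e2 : (fun ω : Ω => -(U*x) + (U-W)*D ω - α)
        = fun ω : Ω => (-(U*x) - α) + (U-W) * D ω := by
      funext ω; ring
    rw [e1, e2, hind _ _ s hs, hind _ _ t ht, hms, hmt, ← hI₁, ← hI₂]
    ring
  -- the key algebraic identity
  have hm2' : 1 - F q₂ = E*(1-β)/(E+U) := by
    rw [hq₂]; field_simp; ring
  have halg : ∀ x α : ℝ, α + (1/(1-β)) * (((E*x - α) * F q₁ - (E+W) * I₁)
      + ((-(U*x) - α) * (1 - F q₂) + (U-W) * I₂)) = C := by
    intro x α
    rw [hq₁, hm2', hC]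
    field_simp
    ring
  -- pointwise lower bound
  have hpt : ∀ x α : ℝ, ∀ ω : Ω, s.indicator (fun ω => E*x - (E+W)*D ω - α) ω
      + t.indicator (fun ω => -(U*x) + (U-W)*D ω - α) ω ≤ max (L x (D ω) - α) 0 := by
    intro x α ω
    rw [hLmax]
    by_cases h1 : ω ∈ s
    · have hd : D ω ≤ q₁ := (hmem_s ω).mp h1
      have h2 : ω ∉ t := by
        intro hh
        have := (hmem_t ω).mp hh
        linarith
      rw [Set.indicator_of_mem h1, Set.indicator_of_notMem h2, add_zero]
      exact le_trans (sub_le_sub_right (le_max_left _ _) α) (le_max_left _ _)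
    · by_cases h2 : ω ∈ t
      · rw [Set.indicator_of_notMem h1, Set.indicator_of_mem h2, zero_add]
        exact le_trans (sub_le_sub_right (le_max_right _ _) α) (le_max_left _ _)
      · rw [Set.indicator_of_notMem h1, Set.indicator_of_notMem h2, add_zero]
        exact le_max_right _ _
  -- the lower bound on the objective
  have hlow : ∀ x α : ℝ, C ≤ α + (1/(1-β)) * ∫ ω, max (L x (D ω) - α) 0 ∂P := by
    intro x α
    have hI := integral_mono (hGint x α) (hLint x α) (hpt x α)
    rw [hGval x α] at hI
    have h1β : (0:ℝ) ≤ 1/(1-β) := by positivity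
    calc C = α + (1/(1-β)) * (((E*x - α) * F q₁ - (E+W) * I₁)
          + ((-(U*x) - α) * (1 - F q₂) + (U-W) * I₂)) := (halg x α).symm
      _ ≤ α + (1/(1-β)) * ∫ ω, max (L x (D ω) - α) 0 ∂P := by
          have := mul_le_mul_of_nonneg_left hI h1β
          linarith
  -- the optimal (xs, αs)
  obtain ⟨αs, hαs⟩ : ∃ y : ℝ, y = E*xs - (E+W)*q₁ := ⟨_, rfl⟩
  have hxs' : (E+U) * xs = (E+W)*q₁ + (U-W)*q₂ := by
    rw [hxs]; field_simp
  have hkey : (E+W)*(xs - q₁) + (U-W)*(xs - q₂) = 0 := by linear_combination hxs'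
  have hq1xs : q₁ ≤ xs := by
    by_contra h
    push_neg at h
    have h1 : (0:ℝ) < (E+W)*(q₁ - xs) := mul_pos hEW (sub_pos.mpr h)
    have h2 : (0:ℝ) ≤ (U-W)*(q₂ - xs) :=
      mul_nonneg hUW (sub_nonneg.mpr (le_of_lt (lt_trans h hq12)))
    nlinarith [h1, h2, hkey]
  have hxsq2 : xs ≤ q₂ := by
    by_contra h
    push_neg at h
    have h1 : (0:ℝ) < (E+W)*(xs - q₁) := mul_pos hEW (sub_pos.mpr (lt_trans hq12 h))
    have h2 : (0:ℝ) ≤ (U-W)*(xs - q₂) := mul_nonneg hUW (sub_nonneg.mpr h.le)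
    linarith [h1, h2, hkey]
  have hαs2 : αs = -(U*xs) + (U-W)*q₂ := by
    rw [hαs]; linear_combination hxs'
  -- pointwise equality at (xs, αs)
  have hpteq : ∀ ω : Ω, max (L xs (D ω) - αs) 0
      = s.indicator (fun ω => E*xs - (E+W)*D ω - αs) ω
        + t.indicator (fun ω => -(U*xs) + (U-W)*D ω - αs) ω := by
    intro ω
    rw [hLmax]
    by_cases h1 : ω ∈ s
    · have hd : D ω ≤ q₁ := (hmem_s ω).mp h1
      have h2 : ω ∉ t := by
        intro hh
        have := (hmem_t ω).mp hh
        linarith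
      rw [Set.indicator_of_mem h1, Set.indicator_of_notMem h2, add_zero]
      have hBA : -(U*xs) + (U-W)*D ω ≤ E*xs - (E+W)*D ω := by
        have hprod : (0:ℝ) ≤ (E+U)*(xs - D ω) :=
          mul_nonneg hEU.le (sub_nonneg.mpr (hd.trans hq1xs))
        have hexp : E*xs - (E+W)*D ω - (-(U*xs) + (U-W)*D ω) = (E+U)*(xs - D ω) := by ring
        linarith
      have hA0 : (0:ℝ) ≤ E*xs - (E+W)*D ω - αs := by
        rw [hαs]
        have hprod : (0:ℝ) ≤ (E+W)*(q₁ - D ω) := mul_nonneg hEW.le (sub_nonneg.mpr hd)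
        have hexp : E*xs - (E+W)*D ω - (E*xs - (E+W)*q₁) = (E+W)*(q₁ - D ω) := by ring
        linarith
      rw [max_eq_left hBA, max_eq_left hA0]
    · by_cases h2 : ω ∈ t
      · have hd : q₂ < D ω := (hmem_t ω).mp h2
        rw [Set.indicator_of_notMem h1, Set.indicator_of_mem h2, zero_add]
        have hAB : E*xs - (E+W)*D ω ≤ -(U*xs) + (U-W)*D ω := by
          have hprod : (0:ℝ) ≤ (E+U)*(D ω - xs) :=
            mul_nonneg hEU.le (sub_nonneg.mpr (hxsq2.trans hd.le))
          have hexp : -(U*xs) + (U-W)*D ω - (E*xs - (E+W)*D ω) = (E+U)*(D ω - xs) := by ring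
          linarith
        have hB0 : (0:ℝ) ≤ -(U*xs) + (U-W)*D ω - αs := by
          rw [hαs2]
          have hprod : (0:ℝ) ≤ (U-W)*(D ω - q₂) := mul_nonneg hUW (sub_nonneg.mpr hd.le)
          have hexp : -(U*xs) + (U-W)*D ω - (-(U*xs) + (U-W)*q₂) = (U-W)*(D ω - q₂) := by
            ring
          linarith
        rw [max_eq_right hAB, max_eq_left hB0]
      · have hd1 : q₁ < D ω := lt_of_not_ge (fun hh => h1 ((hmem_s ω).mpr hh))
        have hd2 : D ω ≤ q₂ := le_of_not_gt (fun hh => h2 ((hmem_t ω).mpr hh))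
        rw [Set.indicator_of_notMem h1, Set.indicator_of_notMem h2, add_zero]
        have hA0 : E*xs - (E+W)*D ω - αs ≤ 0 := by
          rw [hαs]
          have hprod : (0:ℝ) ≤ (E+W)*(D ω - q₁) := mul_nonneg hEW.le (sub_nonneg.mpr hd1.le)
          have hexp : E*xs - (E+W)*q₁ - (E*xs - (E+W)*D ω) = (E+W)*(D ω - q₁) := by ring
          linarith
        have hB0 : -(U*xs) + (U-W)*D ω - αs ≤ 0 := by
          rw [hαs2]
          have hprod : (0:ℝ) ≤ (U-W)*(q₂ - D ω) := mul_nonneg hUW (sub_nonneg.mpr hd2)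
          have hexp : -(U*xs) + (U-W)*q₂ - (-(U*xs) + (U-W)*D ω) = (U-W)*(q₂ - D ω) := by
            ring
          linarith
        rw [max_eq_right (by simp only [sub_nonpos]; exact max_le (by linarith) (by linarith))]
  -- value at (xs, αs) equals C
  have hfeq : αs + (1/(1-β)) * ∫ ω, max (L xs (D ω) - αs) 0 ∂P = C := by
    rw [integral_congr_ae (Filter.Eventually.of_forall hpteq), hGval xs αs]
    exact halg xs αs
  -- conclusion
  intro x
  simp only [hCVaR]
  have hbdd : BddBelow (Set.range fun α : ℝ =>
      α + (1/(1-β)) * ∫ ω, max (L xs (D ω) - α) 0 ∂P) := by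
    refine ⟨C, ?_⟩
    rintro y ⟨α, rfl⟩
    exact hlow xs α
  have h1 : (⨅ α : ℝ, α + (1/(1-β)) * ∫ ω, max (L xs (D ω) - α) 0 ∂P) ≤ C := by
    have := ciInf_le hbdd αs
    rwa [hfeq] at this
  exact le_ciInf fun α => le_trans h1 (hlow x α)
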